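/- Let w : Fin n → ℝ. The function f(α) = H(softmax(α • w)) is differentiable on ℝ, and its derivative is f'(α) = −α · ( ∑ᵢ p i · (w i)² − ( ∑ᵢ p i · w i )² ), where p = softmax(α • w); i.e., the derivative equals −α times the variance of the logits w under the distribution softmax(α • w). -/

import Mathlib

/-- The softmax function on `ℝⁿ`. -/
noncomputable def softmax {n : ℕ} (u : Fin n → ℝ) : Fin n → ℝ :=
  fun i => Real.exp (u i) / ∑ j, Real.exp (u j)

/-- Shannon entropy of a probability vector (with the convention `0 · log 0 = 0`,
which holds since `Real.log 0 = 0` in Mathlib). -/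
noncomputable def entropy {n : ℕ} (p : Fin n → ℝ) : ℝ :=
  -∑ i, p i * Real.log (p i)

section aux

variable {n : ℕ} (w : Fin n → ℝ)

private noncomputable def Sf (α : ℝ) : ℝ := ∑ j, Real.exp (α * w j)
private noncomputable def Tf (α : ℝ) : ℝ := ∑ j, w j * Real.exp (α * w j)
private noncomputable def Uf (α : ℝ) : ℝ := ∑ j, (w j) ^ 2 * Real.exp (α * w j)

private lemma hS (α : ℝ) : HasDerivAt (Sf w) (Tf w α) α := by
  unfold Sf Tf
  refine HasDerivAt.fun_sum fun j _ => ?_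
  have h := ((hasDerivAt_id α).mul_const (w j)).exp
  simpa [mul_comm] using h

private lemma hT (α : ℝ) : HasDerivAt (Tf w) (Uf w α) α := by
  unfold Tf Uf
  refine HasDerivAt.fun_sum fun j _ => ?_
  have h := (((hasDerivAt_id α).mul_const (w j)).exp).const_mul (w j)
  simpa [mul_comm, mul_assoc, pow_two] using h

private lemma Spos [NeZero n] (α : ℝ) : 0 < Sf w α :=
  Finset.sum_pos (fun j _ => Real.exp_pos _) ⟨⟨0, Nat.pos_of_ne_zero (NeZero.ne n)⟩, Finset.mem_univ _⟩

private lemma entropy_eq [NeZero n] (α : ℝ) :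
    entropy (softmax (α • w)) = Real.log (Sf w α) - α * (Tf w α / Sf w α) := by
  have hSne : Sf w α ≠ 0 := (Spos w α).ne'
  have hlog : ∀ i : Fin n, Real.log (Real.exp (α * w i) / Sf w α)
      = α * w i - Real.log (Sf w α) := by
    intro i
    rw [Real.log_div (Real.exp_ne_zero _) hSne, Real.log_exp]
  simp only [entropy, softmax, Pi.smul_apply, smul_eq_mul]
  have : ∀ i : Fin n, Real.exp (α * w i) / Sf w α * Real.log (Real.exp (α * w i) / Sf w α)
      = (α * (w i * Real.exp (α * w i)) - Real.log (Sf w α) * Real.exp (α * w i)) / Sf w α := by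
    intro i
    rw [hlog i]
    field_simp
  calc -∑ i, Real.exp (α * w i) / (∑ j, Real.exp (α * w j))
          * Real.log (Real.exp (α * w i) / (∑ j, Real.exp (α * w j)))
      = -∑ i, (α * (w i * Real.exp (α * w i)) - Real.log (Sf w α) * Real.exp (α * w i)) / Sf w α := by
        simp only [← this]; rfl
    _ = -((α * Tf w α - Real.log (Sf w α) * Sf w α) / Sf w α) := by
        rw [← Finset.sum_div, Finset.sum_sub_distrib, ← Finset.mul_sum, ← Finset.mul_sum]
        rfl
    _ = Real.log (Sf w α) - α * (Tf w α / Sf w α) := by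
        field_simp
        ring

end aux

/-- The function `f(α) = H(softmax (α • w))` is differentiable on `ℝ`
and its derivative at `α` equals `−α` times the variance of the logits `w` under the
distribution `p = softmax (α • w)`. -/
theorem entropy_softmax_hasDerivAt {n : ℕ} (w : Fin n → ℝ) :
    Differentiable ℝ (fun α : ℝ => entropy (softmax (α • w))) ∧
    ∀ α : ℝ,
      HasDerivAt (fun α : ℝ => entropy (softmax (α • w)))
        (-α * (∑ i, softmax (α • w) i * (w i) ^ 2 -
               (∑ i, softmax (α • w) i * w i) ^ 2)) α := by
  have h : ∀ α : ℝ,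
      HasDerivAt (fun α : ℝ => entropy (softmax (α • w)))
        (-α * (∑ i, softmax (α • w) i * (w i) ^ 2 -
               (∑ i, softmax (α • w) i * w i) ^ 2)) α := by
    rcases Nat.eq_zero_or_pos n with hn | hn
    · subst hn
      intro α
      have : (fun α : ℝ => entropy (softmax (α • w))) = fun _ => (0 : ℝ) := by
        funext β; simp [entropy]
      rw [this]
      simpa using hasDerivAt_const α (0 : ℝ)
    · haveI : NeZero n := ⟨hn.ne'⟩
      intro α
      have hSne : Sf w α ≠ 0 := (Spos w α).ne'
      have hdiv : HasDerivAt (fun α => Tf w α / Sf w α)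
          ((Uf w α * Sf w α - Tf w α * Tf w α) / Sf w α ^ 2) α :=
        (hT w α).div (hS w α) hSne
      have hmul : HasDerivAt (fun α => α * (Tf w α / Sf w α))
          (1 * (Tf w α / Sf w α) + α * ((Uf w α * Sf w α - Tf w α * Tf w α) / Sf w α ^ 2)) α :=
        (hasDerivAt_id α).mul hdiv
      have hlog : HasDerivAt (fun α => Real.log (Sf w α)) (Tf w α / Sf w α) α := by
        simpa using (hS w α).log hSne
      have hg : HasDerivAt (fun α => Real.log (Sf w α) - α * (Tf w α / Sf w α))
          (Tf w α / Sf w α - (1 * (Tf w α / Sf w α)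
            + α * ((Uf w α * Sf w α - Tf w α * Tf w α) / Sf w α ^ 2))) α := hlog.sub hmul
      have hfun : (fun α : ℝ => entropy (softmax (α • w)))
          = fun α => Real.log (Sf w α) - α * (Tf w α / Sf w α) := by
        funext β; exact entropy_eq w β
      rw [hfun]
      convert hg using 1
      have h1 : ∑ i, softmax (α • w) i * (w i) ^ 2 = Uf w α / Sf w α := by
        unfold Sf Uf softmax
        rw [Finset.sum_div]
        refine Finset.sum_congr rfl fun i _ => ?_
        simp only [Pi.smul_apply, smul_eq_mul]
        ring
      have h2 : ∑ i, softmax (α • w) i * w i = Tf w α / Sf w α := by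
        unfold Sf Tf softmax
        rw [Finset.sum_div]
        refine Finset.sum_congr rfl fun i _ => ?_
        simp only [Pi.smul_apply, smul_eq_mul]
        ring
      rw [h1, h2]
      field_simp
      ring
  exact ⟨fun α => (h α).differentiableAt, h⟩
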